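/- Let γ(s) = e^{As} γ₀ where A is a real skew-symmetric n×n matrix and γ₀ ∈ ℝⁿ. Then for any two parameters x and y, the inner product of the chord γ(y) − γ(x) with the tangent vector γ'(x) equals the inner product of the chord with γ'(y): ⟨γ(y) − γ(x), γ'(x)⟩ = ⟨γ(y) − γ(x), γ'(y)⟩. -/

import Mathlib

open Matrix

lemma skew_dot (n : ℕ) (A : Matrix (Fin n) (Fin n) ℝ) (hA : Aᵀ = -A)
    (v : Fin n → ℝ) : v ⬝ᵥ A.mulVec v = 0 := by
  have h : v ⬝ᵥ A.mulVec v = Aᵀ.mulVec v ⬝ᵥ v := by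
    rw [dotProduct_mulVec, mulVec_transpose]
  rw [hA, neg_mulVec, neg_dotProduct, dotProduct_comm, ← dotProduct_comm v (A.mulVec v)] at h
  linarith

/-- For the curve `γ(s) = e^{As} γ₀` with `A` skew-symmetric, any chord makes
equal "projections" on the tangent vectors `γ'(s) = A e^{As} γ₀` at its two
endpoints: `⟨γ(y) − γ(x), γ'(x)⟩ = ⟨γ(y) − γ(x), γ'(y)⟩`. -/
theorem wire_chord_equal_tangent_projections
    (n : ℕ) (A : Matrix (Fin n) (Fin n) ℝ) (hA : Aᵀ = -A)
    (γ₀ : Fin n → ℝ) (x y : ℝ) :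
    ((NormedSpace.exp (y • A)).mulVec γ₀ - (NormedSpace.exp (x • A)).mulVec γ₀) ⬝ᵥ
        ((A * NormedSpace.exp (x • A)).mulVec γ₀) =
      ((NormedSpace.exp (y • A)).mulVec γ₀ - (NormedSpace.exp (x • A)).mulVec γ₀) ⬝ᵥ
        ((A * NormedSpace.exp (y • A)).mulVec γ₀) := by
  set gx := (NormedSpace.exp (x • A)).mulVec γ₀
  set gy := (NormedSpace.exp (y • A)).mulVec γ₀
  have hx : (A * NormedSpace.exp (x • A)).mulVec γ₀ = A.mulVec gx := by
    simp [gx, mulVec_mulVec]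
  have hy : (A * NormedSpace.exp (y • A)).mulVec γ₀ = A.mulVec gy := by
    simp [gy, mulVec_mulVec]
  rw [hx, hy]
  have key := skew_dot n A hA (gy - gx)
  have : A.mulVec (gy - gx) = A.mulVec gy - A.mulVec gx := by
    simp [mulVec_sub]
  rw [this, dotProduct_sub] at key
  linarith
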